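/- Let α > 1 and d ≥ 2, and let X = {(α^{n₁},…,α^{n_d}) : nᵢ ∈ ℕ, n₁+⋯+n_d = k} where k = ⌊√(1/(α−1))⌋. Then the convex hull of X contains no point of the exponential lattice L_d(α) = {α^n : n ∈ ℕ}^d other than the points of X themselves. -/
import Mathlib

open Finset in
private lemma aux_super {ι : Type*} (α : ℝ) (hα : 1 ≤ α) (s : Finset ι) (f : ι → ℕ) :
    ∑ i ∈ s, (α ^ f i - 1) ≤ α ^ (∑ i ∈ s, f i) - 1 := by
  classical
  induction s using Finset.induction with
  | empty => simp
  | @insert j s' hj ih =>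
    rw [Finset.sum_insert hj, Finset.sum_insert hj, pow_add]
    have h1 : (1:ℝ) ≤ α ^ f j := one_le_pow₀ hα
    have h2 : (1:ℝ) ≤ α ^ (∑ i ∈ s', f i) := one_le_pow₀ hα
    nlinarith [mul_nonneg (sub_nonneg.mpr h1) (sub_nonneg.mpr h2)]

private lemma aux_key (α : ℝ) (hα : 1 < α) (k : ℕ) (hk : k = ⌊Real.sqrt (1 / (α - 1))⌋₊) :
    α ^ k - 1 < ((k : ℝ) + 1) * (α - 1) := by
  have ht : (0:ℝ) < α - 1 := by linarith
  have hgeom : (∑ i ∈ Finset.range k, α ^ i) * (α - 1) = α ^ k - 1 := geom_sum_mul α k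
  rw [← hgeom]
  have hsum : (∑ i ∈ Finset.range k, α ^ i) < (k : ℝ) + 1 := by
    rcases Nat.eq_zero_or_pos k with h0 | hpos
    · subst h0; simp
    · have hfl : (k:ℝ) ≤ Real.sqrt (1 / (α - 1)) := by
        rw [hk]; exact Nat.floor_le (Real.sqrt_nonneg _)
      have hk2 : (k:ℝ)^2 * (α - 1) ≤ 1 := by
        have h2 : (k:ℝ)^2 ≤ 1 / (α - 1) := by
          calc (k:ℝ)^2 ≤ Real.sqrt (1 / (α - 1)) ^ 2 :=
                pow_le_pow_left₀ (Nat.cast_nonneg k) hfl 2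
          _ = 1 / (α - 1) := Real.sq_sqrt (by positivity)
        calc (k:ℝ)^2 * (α - 1) ≤ (1 / (α - 1)) * (α - 1) :=
              mul_le_mul_of_nonneg_right h2 (le_of_lt ht)
        _ = 1 := by field_simp
      have hk1 : (1:ℝ) ≤ (k:ℝ) := by exact_mod_cast hpos
      have hk2' : (1:ℝ) ≤ (k:ℝ)^2 := by nlinarith
      have ht1 : α - 1 ≤ 1 := by nlinarith
      set c : ℝ := 1 - ((k:ℝ) - 1) * (α - 1) with hc
      have hcpos : 0 < c := by nlinarith
      have hterm : ∀ i ∈ Finset.range k, α ^ i * c ≤ 1 := by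
        intro i hi
        have hik : (i:ℝ) ≤ (k:ℝ) - 1 := by
          have hi' := Finset.mem_range.mp hi
          have : (i:ℝ) + 1 ≤ (k:ℝ) := by exact_mod_cast hi'
          linarith
        have hbern : 1 - (i:ℝ) * (α - 1) ≤ (2 - α) ^ i := by
          have := one_add_mul_le_pow (a := -(α - 1)) (by linarith) i
          calc 1 - (i:ℝ) * (α - 1) = 1 + (i:ℝ) * (-(α - 1)) := by ring
          _ ≤ (1 + -(α - 1)) ^ i := this
          _ = (2 - α) ^ i := by ring_nf
        have hpowpos : (0:ℝ) < α ^ i := by positivity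
        have hprod : α ^ i * (2 - α) ^ i ≤ 1 := by
          rw [← mul_pow]
          apply pow_le_one₀ (by nlinarith) (by nlinarith)
        calc α ^ i * c ≤ α ^ i * (1 - (i:ℝ) * (α - 1)) := by
              apply mul_le_mul_of_nonneg_left _ (le_of_lt hpowpos)
              have := mul_le_mul_of_nonneg_right hik (le_of_lt ht)
              simp only [hc]; linarith
        _ ≤ α ^ i * (2 - α) ^ i := mul_le_mul_of_nonneg_left hbern (le_of_lt hpowpos)
        _ ≤ 1 := hprod
      have hsc : (∑ i ∈ Finset.range k, α ^ i) * c ≤ (k:ℝ) := by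
        calc (∑ i ∈ Finset.range k, α ^ i) * c = ∑ i ∈ Finset.range k, α ^ i * c :=
              Finset.sum_mul _ _ _
        _ ≤ ∑ _i ∈ Finset.range k, (1:ℝ) := Finset.sum_le_sum hterm
        _ = (k:ℝ) := by simp
      have hkc : (k:ℝ) < ((k:ℝ) + 1) * c := by
        have : ((k:ℝ) + 1) * c = (k:ℝ) + 1 - ((k:ℝ)^2 - 1) * (α - 1) := by
          simp only [hc]; ring
        nlinarith
      have := lt_of_le_of_lt hsc hkc
      exact lt_of_mul_lt_mul_right this (le_of_lt hcpos)
  exact mul_lt_mul_of_pos_right hsum ht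

theorem stmt_5 (α : ℝ) (hα : 1 < α) (d : ℕ) (hd : 2 ≤ d)
    (k : ℕ) (hk : k = ⌊Real.sqrt (1 / (α - 1))⌋₊)
    (X : Set (Fin d → ℝ))
    (hX : X = {x | ∃ n : Fin d → ℕ, (∑ i, n i) = k ∧ ∀ i, x i = α ^ (n i)})
    (L : Set (Fin d → ℝ))
    (hL : L = {x | ∀ i, ∃ n : ℕ, x i = α ^ n}) :
    convexHull ℝ X ∩ L ⊆ X := by
  classical
  have ht : (0:ℝ) < α - 1 := by linarith
  have hα0 : (0:ℝ) < α := by linarith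
  have hlog : 0 < Real.log α := Real.log_pos hα
  rintro p ⟨hp_hull, hp_L⟩
  rw [hL] at hp_L
  choose m hm using hp_L
  rw [convexHull_eq] at hp_hull
  obtain ⟨ι, s, w, z, hw0, hw1, hz, hcen⟩ := hp_hull
  rw [Finset.centerMass_eq_of_sum_1 _ _ hw1] at hcen
  simp only [hX, Set.mem_setOf_eq] at hz
  choose! N hN1 hN2 using hz
  have hp : ∀ i, p i = ∑ j ∈ s, w j * α ^ N j i := by
    intro i
    rw [← hcen, Finset.sum_apply]
    refine Finset.sum_congr rfl fun j hj => ?_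
    simp [hN2 j hj i]
  -- Step A : k ≤ ∑ m i
  have hconv : ConvexOn ℝ Set.univ (fun x : ℝ => Real.exp (Real.log α * x)) := by
    refine ⟨convex_univ, fun x _ y _ a b ha hb hab => ?_⟩
    have h := convexOn_exp.2 (Set.mem_univ (Real.log α * x)) (Set.mem_univ (Real.log α * y)) ha hb hab
    simp only [smul_eq_mul] at h ⊢
    calc Real.exp (Real.log α * (a * x + b * y))
        = Real.exp (a * (Real.log α * x) + b * (Real.log α * y)) := by ring_nf
    _ ≤ a * Real.exp (Real.log α * x) + b * Real.exp (Real.log α * y) := h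
  have hcoord : ∀ i, ∑ j ∈ s, w j * (N j i : ℝ) ≤ (m i : ℝ) := by
    intro i
    have hj := hconv.map_sum_le (p := fun j => (N j i : ℝ)) hw0 hw1 (fun j _ => Set.mem_univ _)
    have hrw : ∀ j ∈ s, w j • Real.exp (Real.log α * (N j i : ℝ)) = w j * α ^ N j i := by
      intro j _
      rw [smul_eq_mul, mul_comm (Real.log α), Real.exp_nat_mul, Real.exp_log hα0]
    rw [Finset.sum_congr rfl hrw] at hj
    have hpe : ∑ j ∈ s, w j * (α:ℝ) ^ N j i = Real.exp (Real.log α * (m i : ℝ)) := by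
      rw [← hp i, hm i, mul_comm, Real.exp_nat_mul, Real.exp_log hα0]
    rw [hpe] at hj
    have h2 : Real.log α * (∑ j ∈ s, w j * (N j i : ℝ)) ≤ Real.log α * (m i : ℝ) := by
      have := Real.exp_le_exp.mp hj
      simpa [smul_eq_mul] using this
    exact le_of_mul_le_mul_left h2 hlog
  have hA : (k:ℝ) ≤ ∑ i, (m i : ℝ) := by
    calc (k:ℝ) = ∑ j ∈ s, w j * (k:ℝ) := by rw [← Finset.sum_mul, hw1, one_mul]
    _ = ∑ j ∈ s, ∑ i, w j * (N j i : ℝ) := by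
        refine Finset.sum_congr rfl fun j hj => ?_
        rw [← Finset.mul_sum]
        congr 1
        rw [← hN1 j hj]
        push_cast
        ring
    _ = ∑ i, ∑ j ∈ s, w j * (N j i : ℝ) := Finset.sum_comm
    _ ≤ ∑ i, (m i : ℝ) := Finset.sum_le_sum fun i _ => hcoord i
  -- Step B : ∑ p i ≤ α^k + d - 1
  have hB : ∑ i, p i ≤ α ^ k + d - 1 := by
    have hrw : ∑ i, p i = ∑ j ∈ s, w j * (∑ i, (α:ℝ) ^ N j i) := by
      simp only [hp]
      rw [Finset.sum_comm]
      simp [Finset.mul_sum]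
    rw [hrw]
    have hub : ∀ j ∈ s, (∑ i, (α:ℝ) ^ N j i) ≤ α ^ k + d - 1 := by
      intro j hj
      have hs := aux_super α (le_of_lt hα) Finset.univ (N j)
      rw [hN1 j hj] at hs
      have hcard : ∑ i : Fin d, ((α:ℝ) ^ N j i - 1) = (∑ i, (α:ℝ) ^ N j i) - d := by
        rw [Finset.sum_sub_distrib]
        simp
      linarith
    calc ∑ j ∈ s, w j * (∑ i, (α:ℝ) ^ N j i) ≤ ∑ j ∈ s, w j * (α ^ k + d - 1) :=
        Finset.sum_le_sum fun j hj => by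
          have h1 : (0:ℝ) ≤ ∑ i, (α:ℝ) ^ N j i := Finset.sum_nonneg fun i _ => by positivity
          exact mul_le_mul_of_nonneg_left (hub j hj) (hw0 j hj)
    _ = α ^ k + d - 1 := by rw [← Finset.sum_mul, hw1, one_mul]
  -- Step C
  have hAk : k ≤ ∑ i, m i := by exact_mod_cast hA
  rcases eq_or_lt_of_le hAk with heq | hlt
  · rw [hX]
    exact ⟨m, heq.symm, hm⟩
  · exfalso
    have hK : (k:ℝ) + 1 ≤ ∑ i, (m i : ℝ) := by
      have : k + 1 ≤ ∑ i, m i := hlt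
      exact_mod_cast this
    have hsum : (∑ i, (m i:ℝ)) * (α - 1) + d ≤ ∑ i, p i := by
      have hb : ∀ i : Fin d, 1 + (m i : ℝ) * (α - 1) ≤ p i := by
        intro i
        rw [hm i]
        have := one_add_mul_le_pow (a := α - 1) (by linarith) (m i)
        calc 1 + (m i : ℝ) * (α - 1) ≤ (1 + (α - 1)) ^ m i := this
        _ = α ^ m i := by ring_nf
      calc (∑ i, (m i:ℝ)) * (α - 1) + d = ∑ i : Fin d, (1 + (m i:ℝ) * (α - 1)) := by
            rw [Finset.sum_add_distrib, Finset.sum_mul]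
            simp [add_comm]
      _ ≤ ∑ i, p i := Finset.sum_le_sum fun i _ => hb i
    have hkey := aux_key α hα k hk
    have hmul : ((k:ℝ) + 1) * (α - 1) ≤ (∑ i, (m i:ℝ)) * (α - 1) :=
      mul_le_mul_of_nonneg_right hK (le_of_lt ht)
    linarith
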